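/- Let q be a power of an odd prime. Let A, B₁, …, B_n, C be multiplicative characters of 𝔽_q^× such that the Jacobi sums J(A, CĀ) and J(A, C̄B₁B₂⋯B_n) are both nonzero. Then for any λ₁, …, λ_n ∈ 𝔽_q, 𝔽_D^{(n)}[A; B₁,…,B_n; C; λ₁,…,λ_n] = ( J(A, C̄B₁B₂⋯B_n) / (A(−1)·J(A, CĀ)) ) · 𝔽_D^{(n)}[A; B₁,…,B_n; A·C̄·B₁B₂⋯B_n; 1−λ₁, …, 1−λ_n]. -/

import Mathlib

open Finset

/-- Jacobi sum `J(A,B) = Σ_x A(x) B(1-x)`. -/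
noncomputable def jacobiSum' {F : Type} [Field F] [Fintype F] (A B : MulChar F ℂ) : ℂ :=
  ∑ x : F, A x * B (1 - x)

/-- One-variable finite-field period function `ℙ_D^{(1)}[A; B; C; λ]`. -/
noncomputable def P1 {F : Type} [Field F] [Fintype F] (A B C : MulChar F ℂ) (l : F) : ℂ :=
  ∑ y : F, A y * (C * A⁻¹) (1 - y) * B⁻¹ (1 - l * y)

/-- Two-variable finite-field Appell–Lauricella period function `ℙ_D^{(2)}`. -/
noncomputable def P2 {F : Type} [Field F] [Fintype F] (A B₁ B₂ C : MulChar F ℂ) (l₁ l₂ : F) : ℂ :=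
  ∑ y : F, A y * (C * A⁻¹) (1 - y) * B₁⁻¹ (1 - l₁ * y) * B₂⁻¹ (1 - l₂ * y)

/-- n-variable finite-field Appell–Lauricella period function `ℙ_D^{(n)}`. -/
noncomputable def PDn {F : Type} [Field F] [Fintype F] (n : ℕ) (A : MulChar F ℂ)
    (B : Fin n → MulChar F ℂ) (C : MulChar F ℂ) (l : Fin n → F) : ℂ :=
  ∑ y : F, A y * (C * A⁻¹) (1 - y) * ∏ i, (B i)⁻¹ (1 - l i * y)

/-- Normalized two-variable Appell–Lauricella function `𝔽_D^{(2)}`. -/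
noncomputable def F2 {F : Type} [Field F] [Fintype F] (A B₁ B₂ C : MulChar F ℂ) (l₁ l₂ : F) : ℂ :=
  P2 A B₁ B₂ C l₁ l₂ / jacobiSum' A (C * A⁻¹)

/-- Normalized n-variable Appell–Lauricella function `𝔽_D^{(n)}`. -/
noncomputable def FDn {F : Type} [Field F] [Fintype F] (n : ℕ) (A : MulChar F ℂ)
    (B : Fin n → MulChar F ℂ) (C : MulChar F ℂ) (l : Fin n → F) : ℂ :=
  PDn n A B C l / jacobiSum' A (C * A⁻¹)

/-- Finite-field Gauss hypergeometric function `₂𝔽₁[A,B;C;λ] = ℙ_D^{(1)}[B;A;C;λ]/J(B,C B̄)`. -/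
noncomputable def twoF1 {F : Type} [Field F] [Fintype F] (A B C : MulChar F ℂ) (l : F) : ℂ :=
  P1 B A C l / jacobiSum' B (C * B⁻¹)

open scoped Classical in
/-- `δ(x) = 1` if `x = 0`, else `0`. -/
noncomputable def deltaC {F : Type} [Field F] [Fintype F] (x : F) : ℂ :=
  if x = 0 then 1 else 0

noncomputable instance {F : Type} [Field F] [Fintype F] : Fintype (MulChar F ℂ) :=
  Fintype.ofFinite _

/-- Character binomial coefficient `(A choose χ) = -χ(-1) J(A, χ̄)`. -/
noncomputable def charBinom {F : Type} [Field F] [Fintype F] (A χ : MulChar F ℂ) : ℂ :=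
  -χ (-1) * jacobiSum' A χ⁻¹

section Aux
variable {F : Type} [Field F] [Fintype F]

lemma mc_ne_zero (χ : MulChar F ℂ) {a : F} (ha : a ≠ 0) : χ a ≠ 0 := by
  intro h
  have h1 : χ (a * a⁻¹) = χ a * χ a⁻¹ := map_mul χ a a⁻¹
  rw [mul_inv_cancel₀ ha, map_one, h, zero_mul] at h1
  exact one_ne_zero h1

lemma mc_div (χ : MulChar F ℂ) (a b : F) (hb : b ≠ 0) : χ (a / b) = χ a / χ b := by
  rw [eq_div_iff (mc_ne_zero χ hb), ← map_mul, div_mul_cancel₀ a hb]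

lemma mc_prod_apply {ι : Type*} (s : Finset ι) (B : ι → MulChar F ℂ) {x : F} (hx : x ≠ 0) :
    (∏ i ∈ s, B i) x = ∏ i ∈ s, B i x := by
  induction s using Finset.cons_induction with
  | empty => simpa using MulChar.one_apply_coe (Ne.isUnit hx).unit
  | cons a s ha ih => rw [Finset.prod_cons, Finset.prod_cons, MulChar.mul_apply, ih]

lemma pointwise (n : ℕ) (A C : MulChar F ℂ) (B : Fin n → MulChar F ℂ) (l : Fin n → F)
    (y : F) (hy : y ≠ 1) :
    A y * (C * A⁻¹) (1 - y) * ∏ i, (B i)⁻¹ (1 - l i * y) =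
    A (-1) * (A (y / (y - 1)) * ((A * C⁻¹ * ∏ i, B i) * A⁻¹) (1 - y / (y - 1)) *
      ∏ i, (B i)⁻¹ (1 - (1 - l i) * (y / (y - 1)))) := by
  have hu : y - 1 ≠ 0 := sub_ne_zero.mpr hy
  have h1 : 1 - y / (y - 1) = (-1 : F) / (y - 1) := by field_simp; ring
  have h2 : ∀ i, 1 - (1 - l i) * (y / (y - 1)) = (-1 * (1 - l i * y)) / (y - 1) := by
    intro i; field_simp; ring
  have h3 : (1 : F) - y = -1 * (y - 1) := by ring
  have hdiv : ∀ (χ : MulChar F ℂ) (a : F), χ (a / (y - 1)) = χ a / χ (y - 1) :=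
    fun χ a => mc_div χ a _ hu
  have hm1 : (-1 : F) ≠ 0 := neg_ne_zero.mpr one_ne_zero
  rw [h1, h3]
  simp only [h2, hdiv, map_mul, MulChar.mul_apply, MulChar.inv_apply_eq_inv',
    mc_prod_apply _ _ hm1, mc_prod_apply _ _ hu]
  rw [Finset.prod_div_distrib, Finset.prod_mul_distrib, Finset.prod_inv_distrib,
    Finset.prod_inv_distrib, Finset.prod_inv_distrib]
  have hA1 : A (-1) * A (-1) = 1 := by rw [← map_mul]; norm_num
  have hC1 : C (-1) * C (-1) = 1 := by rw [← map_mul]; norm_num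
  have hA1' : (A (-1))⁻¹ = A (-1) := inv_eq_of_mul_eq_one_right hA1
  have hC1' : (C (-1))⁻¹ = C (-1) := inv_eq_of_mul_eq_one_right hC1
  have hAm : A (-1) ≠ 0 := mc_ne_zero A hm1
  have hCm : C (-1) ≠ 0 := mc_ne_zero C hm1
  have hAu : A (y - 1) ≠ 0 := mc_ne_zero A hu
  have hCu : C (y - 1) ≠ 0 := mc_ne_zero C hu
  have hP1 : (∏ i, (B i) (-1)) ≠ 0 := Finset.prod_ne_zero_iff.mpr fun i _ => mc_ne_zero (B i) hm1
  have hPu : (∏ i, (B i) (y - 1)) ≠ 0 := Finset.prod_ne_zero_iff.mpr fun i _ => mc_ne_zero (B i) hu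
  by_cases hPy : (∏ i, (B i) (1 - l i * y)) = 0
  · rw [hPy]; simp
  · rw [hA1', hC1']
    field_simp
    linear_combination (-(A y * (∏ x, (B x) (1 - y * l x))⁻¹)) * hA1

open scoped Classical in
lemma key (n : ℕ) (A C : MulChar F ℂ) (B : Fin n → MulChar F ℂ) (l : Fin n → F) :
    PDn n A B C l = A (-1) * PDn n A B (A * C⁻¹ * ∏ i, B i) (fun i => 1 - l i) := by
  rw [PDn, PDn, Finset.mul_sum]
  have hf1 : A 1 * (C * A⁻¹) (1 - 1) * ∏ i, (B i)⁻¹ (1 - l i * 1) = 0 := by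
    rw [sub_self, MulChar.map_zero]; ring
  have hg1 : A (-1) * (A 1 * ((A * C⁻¹ * ∏ i, B i) * A⁻¹) (1 - 1) *
      ∏ i, (B i)⁻¹ (1 - (1 - l i) * 1)) = 0 := by
    rw [sub_self, MulChar.map_zero]; ring
  have e1 : ∑ y ∈ Finset.univ.erase (1 : F),
      (A y * (C * A⁻¹) (1 - y) * ∏ i, (B i)⁻¹ (1 - l i * y)) =
      ∑ y : F, A y * (C * A⁻¹) (1 - y) * ∏ i, (B i)⁻¹ (1 - l i * y) :=
    Finset.sum_erase _ hf1
  have e2 : ∑ y ∈ Finset.univ.erase (1 : F),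
      (A (-1) * (A y * ((A * C⁻¹ * ∏ i, B i) * A⁻¹) (1 - y) *
        ∏ i, (B i)⁻¹ (1 - (1 - l i) * y))) =
      ∑ y : F, A (-1) * (A y * ((A * C⁻¹ * ∏ i, B i) * A⁻¹) (1 - y) *
        ∏ i, (B i)⁻¹ (1 - (1 - l i) * y)) :=
    Finset.sum_erase _ hg1
  rw [← e1, ← e2]
  have hmem : ∀ y : F, y ≠ 1 → y / (y - 1) ≠ 1 := by
    intro y hy h
    rw [div_eq_one_iff_eq (sub_ne_zero.mpr hy)] at h
    simpa using congrArg (fun t => t - y) h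
  have hinv : ∀ y : F, y ≠ 1 → (y / (y - 1)) / ((y / (y - 1)) - 1) = y := by
    intro y hy
    have hu : y - 1 ≠ 0 := sub_ne_zero.mpr hy
    have h2 : y / (y - 1) - 1 = 1 / (y - 1) := by field_simp; ring
    rw [h2]
    field_simp
  refine Finset.sum_nbij' (fun y => y / (y - 1)) (fun z => z / (z - 1)) ?_ ?_ ?_ ?_ ?_
  · intro a ha
    simp only [Finset.mem_erase, Finset.mem_univ, and_true] at ha ⊢
    exact hmem a ha
  · intro a ha
    simp only [Finset.mem_erase, Finset.mem_univ, and_true] at ha ⊢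
    exact hmem a ha
  · intro a ha
    simp only [Finset.mem_erase, Finset.mem_univ, and_true] at ha
    exact hinv a ha
  · intro a ha
    simp only [Finset.mem_erase, Finset.mem_univ, and_true] at ha
    exact hinv a ha
  · intro a ha
    simp only [Finset.mem_erase, Finset.mem_univ, and_true] at ha
    exact pointwise n A C B l a ha

end Aux

/-- transformation `λᵢ ↦ 1 - λᵢ` for `𝔽_D^{(n)}`. -/
theorem statement_7 (F : Type) [Field F] [Fintype F] (hq : Odd (Fintype.card F))
    (n : ℕ) (A C : MulChar F ℂ) (B : Fin n → MulChar F ℂ)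
    (hJ1 : jacobiSum' A (C * A⁻¹) ≠ 0)
    (hJ2 : jacobiSum' A (C⁻¹ * ∏ i, B i) ≠ 0)
    (l : Fin n → F) :
    FDn n A B C l =
      jacobiSum' A (C⁻¹ * ∏ i, B i) / (A (-1) * jacobiSum' A (C * A⁻¹)) *
        FDn n A B (A * C⁻¹ * ∏ i, B i) (fun i => 1 - l i) := by
  have hchar : (A * C⁻¹ * ∏ i, B i) * A⁻¹ = C⁻¹ * ∏ i, B i := by
    rw [mul_assoc A C⁻¹ (∏ i, B i), mul_inv_cancel_comm]
  have hA1 : A (-1) * A (-1) = 1 := by rw [← map_mul]; norm_num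
  have hAm : A (-1) ≠ 0 := fun h => by simp [h] at hA1
  rw [FDn, FDn, hchar, key n A C B l]
  set P := PDn n A B (A * C⁻¹ * ∏ i, B i) (fun i => 1 - l i) with hP
  set J1 := jacobiSum' A (C * A⁻¹) with hJ1d
  set J2 := jacobiSum' A (C⁻¹ * ∏ i, B i) with hJ2d
  field_simp
  linear_combination P * hA1
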